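/- Let φ(z) = (az+b)/(cz+d), ad − bc ≠ 0, be a selfmap of 𝔻 that is not an automorphism of 𝔻 (φ(𝔻) ≠ 𝔻), has a fixed point w ∈ 𝔻 (φ(w) = w, |w| < 1), and has no fixed point on the unit circle (φ(ζ) ≠ ζ whenever |ζ| = 1 and cζ + d ≠ 0). Let τ(z) = (w − z)/(1 − conj(w)·z). Then the following are equivalent: (i) the linear-fractional map σ∘φ⁻¹, given explicitly by Ψ(z) = ((conj(a)·d + conj(c)·c)·z − (conj(a)·b + conj(c)·a)) / ((−conj(b)·d − conj(d)·c)·z + (conj(b)·b + conj(d)·a)), maps 𝔻 into 𝔻 (denominator nonzero and |Ψ(z)| < 1 for all z ∈ 𝔻); (ii) there exists α ∈ ℂ with 0 < |α| < 1 such that φ(z) = τ(α·τ(z)) for all z ∈ 𝔻. -/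

import Mathlib

set_option maxHeartbeats 1000000

open ComplexConjugate

private lemma one_sub_ne (u v : ℂ) (hu : ‖u‖ < 1) (hv : ‖v‖ < 1) :
    1 - u * v ≠ 0 := by
  intro h
  have : u * v = 1 := by linear_combination -h
  have := congrArg (‖·‖) this
  rw [norm_mul, norm_one] at this
  nlinarith [norm_nonneg u, norm_nonneg v]

lemma tau_lt (w z : ℂ) (hw : ‖w‖ < 1) (hz : ‖z‖ < 1) :
    1 - conj w * z ≠ 0 ∧ ‖(w - z) / (1 - conj w * z)‖ < 1 := by
  have hcw : ‖conj w‖ < 1 := by rwa [Complex.norm_conj]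
  have hne : 1 - conj w * z ≠ 0 := one_sub_ne _ _ hcw hz
  refine ⟨hne, ?_⟩
  have key : Complex.normSq (w - z) < Complex.normSq (1 - conj w * z) := by
    have h1 : Complex.normSq w < 1 := by
      rw [← Complex.sq_norm]; nlinarith [norm_nonneg w]
    have h2 : Complex.normSq z < 1 := by
      rw [← Complex.sq_norm]; nlinarith [norm_nonneg z]
    have hid : ((Complex.normSq (1 - conj w * z) : ℂ)) - Complex.normSq (w - z)
        = (1 - Complex.normSq w) * (1 - Complex.normSq z) := by
      rw [← Complex.mul_conj, ← Complex.mul_conj, ← Complex.mul_conj, ← Complex.mul_conj]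
      simp only [map_sub, map_mul, map_one, Complex.conj_conj]
      ring
    have hre : Complex.normSq (1 - conj w * z) - Complex.normSq (w - z)
        = (1 - Complex.normSq w) * (1 - Complex.normSq z) := by
      exact_mod_cast hid
    nlinarith
  rw [norm_div, div_lt_one (by simpa [norm_pos_iff] using hne)]
  have := (Complex.sq_norm (w - z)).symm ▸ (Complex.sq_norm (1 - conj w * z)).symm ▸ key
  exact lt_of_pow_lt_pow_left₀ 2 (norm_nonneg _) this

private lemma core (A C D : ℂ) (hC : C ≠ 0)
    (h2 : ∀ z : ℂ, ‖z‖ < 1 →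
      (-conj D * C) * z + conj D * A ≠ 0 ∧
      ‖((conj A * D + conj C * C) * z - conj C * A) /
        ((-conj D * C) * z + conj D * A)‖ < 1) : False := by
  have h0 := (h2 0 (by simp)).1
  have hDA : conj D * A ≠ 0 := by simpa using h0
  have hA : A ≠ 0 := fun h => hDA (by simp [h])
  have hD : D ≠ 0 := fun h => hDA (by simp [h])
  set aa := ‖A‖ with haa
  set cc := ‖C‖ with hcc
  set dd := ‖D‖ with hdd
  have haa0 : 0 < aa := norm_pos_iff.mpr hA
  have hcc0 : 0 < cc := norm_pos_iff.mpr hC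
  have hdd0 : 0 < dd := norm_pos_iff.mpr hD
  -- |C| ≤ |A|
  have hAC : cc ≤ aa := by
    by_contra hlt
    push_neg at hlt
    have hz : ‖A / C‖ < 1 := by
      rw [norm_div, div_lt_one hcc0]; exact hlt
    have := (h2 (A / C) hz).1
    apply this
    field_simp
    ring
  -- the two witness points
  set s : ℝ := cc ^ 2 / (8 * aa ^ 2) with hs
  have hs0 : 0 < s := by positivity
  have hs8 : s ≤ 1 / 8 := by
    rw [hs, div_le_div_iff₀ (by positivity) (by norm_num)]
    nlinarith
  set t : ℝ := 1 - s with ht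
  have ht78 : 7 / 8 ≤ t := by simp [ht]; linarith
  have ht1 : t < 1 := by simp [ht]; linarith
  set u : ℂ := A * (cc : ℂ) / (C * (aa : ℂ)) with hu
  have hu1 : ‖u‖ = 1 := by
    rw [hu, norm_div, norm_mul, norm_mul, Complex.norm_real, Real.norm_eq_abs, Complex.norm_real, Real.norm_eq_abs,
      abs_of_pos hcc0, abs_of_pos haa0]
    field_simp
    ring
  set z₁ : ℂ := (t : ℂ) * u with hz₁
  set z₂ : ℂ := -(t : ℂ) * u with hz₂
  have habs1 : ‖z₁‖ < 1 := by
    rw [hz₁, norm_mul, hu1, mul_one, Complex.norm_real, Real.norm_eq_abs, abs_of_pos (by linarith)]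
    exact ht1
  have habs2 : ‖z₂‖ < 1 := by
    rw [hz₂, neg_mul, norm_neg, norm_mul, hu1, mul_one, Complex.norm_real, Real.norm_eq_abs,
      abs_of_pos (by linarith)]
    exact ht1
  obtain ⟨hden1, hv1⟩ := h2 z₁ habs1
  obtain ⟨hden2, hv2⟩ := h2 z₂ habs2
  -- exact values of |C z - A|
  have hCz1 : C * z₁ - A = A * ((t * cc / aa : ℝ) - 1) := by
    rw [hz₁, hu]
    have : (aa : ℂ) ≠ 0 := by exact_mod_cast haa0.ne'
    push_cast
    field_simp
  have hCz2 : C * z₂ - A = -A * ((t * cc / aa : ℝ) + 1) := by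
    rw [hz₂, hu]
    have : (aa : ℂ) ≠ 0 := by exact_mod_cast haa0.ne'
    push_cast
    field_simp
    ring
  have htca : t * cc / aa < 1 := by
    rw [div_lt_one haa0]; nlinarith
  have habsCz1 : ‖C * z₁ - A‖ = aa - t * cc := by
    rw [hCz1, norm_mul, show ((t * cc / aa : ℝ) : ℂ) - 1 = ((t * cc / aa - 1 : ℝ) : ℂ) by
      push_cast; ring, Complex.norm_real, Real.norm_eq_abs, abs_of_neg (by linarith)]
    field_simp
    rw [← haa]
    ring
  have habsCz2 : ‖C * z₂ - A‖ = aa + t * cc := by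
    rw [hCz2, neg_mul, norm_neg, norm_mul, show ((t * cc / aa : ℝ) : ℂ) + 1
      = ((t * cc / aa + 1 : ℝ) : ℂ) by push_cast; ring, Complex.norm_real, Real.norm_eq_abs,
      abs_of_pos (by positivity)]
    field_simp
    ring
  -- denominators
  have hdenval1 : (-conj D * C) * z₁ + conj D * A = -(conj D * (C * z₁ - A)) := by ring
  have hdenval2 : (-conj D * C) * z₂ + conj D * A = -(conj D * (C * z₂ - A)) := by ring
  have habsden1 : ‖(-conj D * C) * z₁ + conj D * A‖ = dd * (aa - t * cc) := by
    rw [hdenval1, norm_neg, norm_mul, Complex.norm_conj, habsCz1]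
  have habsden2 : ‖(-conj D * C) * z₂ + conj D * A‖ = dd * (aa + t * cc) := by
    rw [hdenval2, norm_neg, norm_mul, Complex.norm_conj, habsCz2]
  -- difference identity
  set N₁ := (conj A * D + conj C * C) * z₁ - conj C * A with hN₁
  set N₂ := (conj A * D + conj C * C) * z₂ - conj C * A with hN₂
  set Dd₁ := (-conj D * C) * z₁ + conj D * A with hDd₁
  set Dd₂ := (-conj D * C) * z₂ + conj D * A with hDd₂
  have hdiff : N₁ / Dd₁ - N₂ / Dd₂ = conj (A * D) * (A * D) * (z₁ - z₂) / (Dd₁ * Dd₂) := by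
    rw [div_sub_div _ _ hden1 hden2, div_eq_div_iff (mul_ne_zero hden1 hden2) (mul_ne_zero hden1 hden2)]
    rw [hN₁, hN₂, hDd₁, hDd₂]
    push_cast [map_mul]
    ring
  have habsz12 : ‖z₁ - z₂‖ = 2 * t := by
    have : z₁ - z₂ = (2 * t : ℝ) * u := by rw [hz₁, hz₂]; push_cast; ring
    rw [this, norm_mul, hu1, mul_one, Complex.norm_real, Real.norm_eq_abs, abs_of_pos (by linarith)]
  have hlt2 : ‖N₁ / Dd₁ - N₂ / Dd₂‖ < 2 := by
    calc ‖N₁ / Dd₁ - N₂ / Dd₂‖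
        ≤ ‖N₁ / Dd₁‖ + ‖N₂ / Dd₂‖ := by
          simpa using norm_sub_le (N₁ / Dd₁) (N₂ / Dd₂)
      _ < 2 := by linarith [hv1, hv2]
  have habsdiff : ‖N₁ / Dd₁ - N₂ / Dd₂‖
      = (aa * dd) ^ 2 * (2 * t) / ((dd * (aa - t * cc)) * (dd * (aa + t * cc))) := by
    rw [hdiff]
    simp only [norm_div, norm_mul, Complex.norm_conj, habsz12, habsden1, habsden2]
    ring
  rw [habsdiff] at hlt2
  -- final contradiction
  have hpos1 : 0 < aa - t * cc := by nlinarith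
  have hpos2 : 0 < aa + t * cc := by positivity
  rw [div_lt_iff₀ (by positivity)] at hlt2
  -- hlt2 : (aa*dd)^2 * (2t) < 2 * (dd*(aa - t cc) * (dd*(aa + t cc)))
  -- i.e. aa^2 * t < aa^2 - t^2 cc^2 ; but t^2 cc^2 > (1-t) aa^2 = s aa^2 = cc^2/8 * ...
  clear_value s t u z₁ z₂ N₁ N₂ Dd₁ Dd₂ aa cc dd
  have hcontra : t ^ 2 * cc ^ 2 > (1 - t) * aa ^ 2 := by
    have : (1 - t) * aa ^ 2 = cc ^ 2 / 8 := by
      rw [ht, hs]; field_simp; ring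
    rw [this]
    have h49 : (49 : ℝ) / 64 ≤ t ^ 2 := by nlinarith [ht78]
    have h50 : (49 : ℝ) / 64 * cc ^ 2 ≤ t ^ 2 * cc ^ 2 :=
      mul_le_mul_of_nonneg_right h49 (sq_nonneg cc)
    have h51 : (0 : ℝ) < cc ^ 2 := pow_pos hcc0 2
    linarith
  have h1 : aa ^ 2 * t < aa ^ 2 - t ^ 2 * cc ^ 2 := by
    nlinarith [hlt2, mul_pos hdd0 hdd0]
  nlinarith [h1, hcontra]

private lemma tau_tau (w v : ℂ) (hw : ‖w‖ < 1) (hv : ‖v‖ < 1) :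
    (w - (w - v) / (1 - conj w * v)) / (1 - conj w * ((w - v) / (1 - conj w * v))) = v := by
  obtain ⟨h1, h2⟩ := tau_lt w v hw hv
  obtain ⟨h3, -⟩ := tau_lt w ((w - v) / (1 - conj w * v)) hw h2
  have hx1 : (1 : ℂ) - conj w * w ≠ 0 := by
    have := one_sub_ne w (conj w) hw (by rwa [Complex.norm_conj])
    simpa [mul_comm] using this
  rw [div_eq_iff h3]
  have h1' : 1 - v * conj w ≠ 0 := by rwa [mul_comm]
  field_simp
  ring

/-- Let `φ(z) = (az+b)/(cz+d)` be a nonautomorphic linear-fractional selfmap of the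
unit disk with a fixed point `w ∈ 𝔻` and no fixed point on the unit circle, and let
`τ(z) = (w-z)/(1 - conj(w)z)`.  Then `σ∘φ⁻¹` maps `𝔻` into `𝔻` if and only if
`φ = τ ∘ (α·) ∘ τ` for some `α` with `0 < |α| < 1`. -/
theorem coposinormal_iff_conjugate_dilation (a b c d w : ℂ)
    (hdet : a * d - b * c ≠ 0)
    (hself : ∀ z : ℂ, ‖z‖ < 1 →
      c * z + d ≠ 0 ∧ ‖(a * z + b) / (c * z + d)‖ < 1)
    (hnotauto : {u : ℂ | ∃ z : ℂ, ‖z‖ < 1 ∧ u = (a * z + b) / (c * z + d)}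
      ≠ {u : ℂ | ‖u‖ < 1})
    (hw : ‖w‖ < 1) (hfix : (a * w + b) / (c * w + d) = w)
    (hnobdry : ∀ ζ : ℂ, ‖ζ‖ = 1 → c * ζ + d ≠ 0 →
      (a * ζ + b) / (c * ζ + d) ≠ ζ) :
    (∀ z : ℂ, ‖z‖ < 1 →
      (-conj b * d - conj d * c) * z + (conj b * b + conj d * a) ≠ 0 ∧
      ‖((conj a * d + conj c * c) * z - (conj a * b + conj c * a)) /
        ((-conj b * d - conj d * c) * z + (conj b * b + conj d * a))‖ < 1) ↔
    (∃ α : ℂ, 0 < ‖α‖ ∧ ‖α‖ < 1 ∧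
      ∀ z : ℂ, ‖z‖ < 1 →
        (a * z + b) / (c * z + d) =
          (w - α * ((w - z) / (1 - conj w * z))) /
            (1 - conj w * (α * ((w - z) / (1 - conj w * z))))) := by
  constructor
  · intro hi
    have hcw : ‖conj w‖ < 1 := by rwa [Complex.norm_conj]
    have hx1 : (1 : ℂ) - w * conj w ≠ 0 := by
      have := one_sub_ne w (conj w) hw hcw
      simpa [mul_comm] using this
    have hwx : ‖w * conj w‖ < 1 := by
      rw [norm_mul, Complex.norm_conj]
      nlinarith [norm_nonneg w]
    have h1px : (1 : ℂ) + w * conj w ≠ 0 := by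
      intro h
      have hx : w * conj w = -1 := by linear_combination h
      rw [hx] at hwx
      simp at hwx
    -- fixed point gives b
    have hb : b = -(w * a) + w ^ 2 * c + w * d := by
      have hcwd := (hself w hw).1
      rw [div_eq_iff hcwd] at hfix
      linear_combination hfix
    subst hb
    -- the conjugated map's coefficient C vanishes
    have hc : c = conj w * (a - d) / (1 + w * conj w) := by
      by_contra hcne
      have hCne : (conj w * a + conj w ^ 2 * (-(w * a) + w ^ 2 * c + w * d) - c - conj w * d) ≠ 0 := by
        intro h
        apply hcne
        rw [eq_div_iff h1px]
        have h2 : (1 - w * conj w) * (c * (1 + w * conj w) - conj w * (a - d)) = 0 := by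
          linear_combination -h
        rcases mul_eq_zero.mp h2 with h3 | h3
        · exact absurd h3 hx1
        · linear_combination h3
      apply core (a + conj w * (-(w * a) + w ^ 2 * c + w * d) - w * c - w * conj w * d) (conj w * a + conj w ^ 2 * (-(w * a) + w ^ 2 * c + w * d) - c - conj w * d) (-(w * conj w) * a - conj w * (-(w * a) + w ^ 2 * c + w * d) + w * c + d) hCne
      intro z hz
      obtain ⟨hzd, hzt⟩ := tau_lt w z hw hz
      obtain ⟨hdP, hu⟩ := hi ((w - z) / (1 - conj w * z)) hzt
      have hzd' : 1 - z * conj w ≠ 0 := by rwa [mul_comm]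
      have hud : 1 - conj w * ((((conj a * d + conj c * c) * ((w - z) / (1 - conj w * z)) - (conj a * (-(w * a) + w ^ 2 * c + w * d) + conj c * a))) / ((-conj (-(w * a) + w ^ 2 * c + w * d) * d - conj d * c) * ((w - z) / (1 - conj w * z)) + (conj (-(w * a) + w ^ 2 * c + w * d) * (-(w * a) + w ^ 2 * c + w * d) + conj d * a))) ≠ 0 := one_sub_ne (conj w) _ hcw hu
      set N1 : ℂ := (conj a * d + conj c * c) * (w - z)
        - (conj a * (-(w * a) + w ^ 2 * c + w * d) + conj c * a) * (1 - conj w * z) with hN1def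
      set D1 : ℂ := (-conj (-(w * a) + w ^ 2 * c + w * d) * d - conj d * c) * (w - z)
        + (conj (-(w * a) + w ^ 2 * c + w * d) * (-(w * a) + w ^ 2 * c + w * d) + conj d * a) * (1 - conj w * z) with hD1def
      have hD1 : D1 = ((-conj (-(w * a) + w ^ 2 * c + w * d) * d - conj d * c) * ((w - z) / (1 - conj w * z)) + (conj (-(w * a) + w ^ 2 * c + w * d) * (-(w * a) + w ^ 2 * c + w * d) + conj d * a)) * (1 - conj w * z) := by
        rw [hD1def]
        field_simp
      have hD1ne : D1 ≠ 0 := by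
        rw [hD1]
        exact mul_ne_zero hdP hzd
      have hN1 : N1 = ((conj a * d + conj c * c) * ((w - z) / (1 - conj w * z)) - (conj a * (-(w * a) + w ^ 2 * c + w * d) + conj c * a))
          * (1 - conj w * z) := by
        rw [hN1def]
        field_simp
      have huN : ((((conj a * d + conj c * c) * ((w - z) / (1 - conj w * z)) - (conj a * (-(w * a) + w ^ 2 * c + w * d) + conj c * a))) / ((-conj (-(w * a) + w ^ 2 * c + w * d) * d - conj d * c) * ((w - z) / (1 - conj w * z)) + (conj (-(w * a) + w ^ 2 * c + w * d) * (-(w * a) + w ^ 2 * c + w * d) + conj d * a))) = N1 / D1 := by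
        rw [hN1, hD1, mul_div_mul_right _ _ hzd]
      have hsub1 : D1 - conj w * N1 = (1 - conj w * ((((conj a * d + conj c * c) * ((w - z) / (1 - conj w * z)) - (conj a * (-(w * a) + w ^ 2 * c + w * d) + conj c * a))) / ((-conj (-(w * a) + w ^ 2 * c + w * d) * d - conj d * c) * ((w - z) / (1 - conj w * z)) + (conj (-(w * a) + w ^ 2 * c + w * d) * (-(w * a) + w ^ 2 * c + w * d) + conj d * a)))) * D1 := by
        rw [huN]
        field_simp
      have hsub2 : w * D1 - N1 = (w - ((((conj a * d + conj c * c) * ((w - z) / (1 - conj w * z)) - (conj a * (-(w * a) + w ^ 2 * c + w * d) + conj c * a))) / ((-conj (-(w * a) + w ^ 2 * c + w * d) * d - conj d * c) * ((w - z) / (1 - conj w * z)) + (conj (-(w * a) + w ^ 2 * c + w * d) * (-(w * a) + w ^ 2 * c + w * d) + conj d * a)))) * D1 := by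
        rw [huN]
        field_simp
      have hkeyden : (-conj (-(w * conj w) * a - conj w * (-(w * a) + w ^ 2 * c + w * d) + w * c + d) * (conj w * a + conj w ^ 2 * (-(w * a) + w ^ 2 * c + w * d) - c - conj w * d)) * z + conj (-(w * conj w) * a - conj w * (-(w * a) + w ^ 2 * c + w * d) + w * c + d) * (a + conj w * (-(w * a) + w ^ 2 * c + w * d) - w * c - w * conj w * d)
          = (1 - w * conj w) * (D1 - conj w * N1) := by
        rw [hN1def, hD1def]
        simp only [map_mul, map_sub, map_add, map_neg, map_pow, map_one, Complex.conj_conj]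
        ring
      have hkeynum : (conj (a + conj w * (-(w * a) + w ^ 2 * c + w * d) - w * c - w * conj w * d) * (-(w * conj w) * a - conj w * (-(w * a) + w ^ 2 * c + w * d) + w * c + d) + conj (conj w * a + conj w ^ 2 * (-(w * a) + w ^ 2 * c + w * d) - c - conj w * d) * (conj w * a + conj w ^ 2 * (-(w * a) + w ^ 2 * c + w * d) - c - conj w * d)) * z - conj (conj w * a + conj w ^ 2 * (-(w * a) + w ^ 2 * c + w * d) - c - conj w * d) * (a + conj w * (-(w * a) + w ^ 2 * c + w * d) - w * c - w * conj w * d)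
          = (1 - w * conj w) * (w * D1 - N1) := by
        rw [hN1def, hD1def]
        simp only [map_mul, map_sub, map_add, map_neg, map_pow, map_one, Complex.conj_conj]
        ring
      have hdenne : (-conj (-(w * conj w) * a - conj w * (-(w * a) + w ^ 2 * c + w * d) + w * c + d) * (conj w * a + conj w ^ 2 * (-(w * a) + w ^ 2 * c + w * d) - c - conj w * d)) * z + conj (-(w * conj w) * a - conj w * (-(w * a) + w ^ 2 * c + w * d) + w * c + d) * (a + conj w * (-(w * a) + w ^ 2 * c + w * d) - w * c - w * conj w * d) ≠ 0 := by
        rw [hkeyden, hsub1]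
        exact mul_ne_zero hx1 (mul_ne_zero hud hD1ne)
      refine ⟨hdenne, ?_⟩
      have hvalue : ((conj (a + conj w * (-(w * a) + w ^ 2 * c + w * d) - w * c - w * conj w * d) * (-(w * conj w) * a - conj w * (-(w * a) + w ^ 2 * c + w * d) + w * c + d) + conj (conj w * a + conj w ^ 2 * (-(w * a) + w ^ 2 * c + w * d) - c - conj w * d) * (conj w * a + conj w ^ 2 * (-(w * a) + w ^ 2 * c + w * d) - c - conj w * d)) * z - conj (conj w * a + conj w ^ 2 * (-(w * a) + w ^ 2 * c + w * d) - c - conj w * d) * (a + conj w * (-(w * a) + w ^ 2 * c + w * d) - w * c - w * conj w * d))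
          / ((-conj (-(w * conj w) * a - conj w * (-(w * a) + w ^ 2 * c + w * d) + w * c + d) * (conj w * a + conj w ^ 2 * (-(w * a) + w ^ 2 * c + w * d) - c - conj w * d)) * z + conj (-(w * conj w) * a - conj w * (-(w * a) + w ^ 2 * c + w * d) + w * c + d) * (a + conj w * (-(w * a) + w ^ 2 * c + w * d) - w * c - w * conj w * d))
          = (w - ((((conj a * d + conj c * c) * ((w - z) / (1 - conj w * z)) - (conj a * (-(w * a) + w ^ 2 * c + w * d) + conj c * a))) / ((-conj (-(w * a) + w ^ 2 * c + w * d) * d - conj d * c) * ((w - z) / (1 - conj w * z)) + (conj (-(w * a) + w ^ 2 * c + w * d) * (-(w * a) + w ^ 2 * c + w * d) + conj d * a)))) / (1 - conj w * ((((conj a * d + conj c * c) * ((w - z) / (1 - conj w * z)) - (conj a * (-(w * a) + w ^ 2 * c + w * d) + conj c * a))) / ((-conj (-(w * a) + w ^ 2 * c + w * d) * d - conj d * c) * ((w - z) / (1 - conj w * z)) + (conj (-(w * a) + w ^ 2 * c + w * d) * (-(w * a) + w ^ 2 * c + w * d) + conj d * a)))) := by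
        rw [hkeynum, hkeyden, hsub1, hsub2, show (1 - w * conj w) * ((w - ((((conj a * d + conj c * c) * ((w - z) / (1 - conj w * z)) - (conj a * (-(w * a) + w ^ 2 * c + w * d) + conj c * a))) / ((-conj (-(w * a) + w ^ 2 * c + w * d) * d - conj d * c) * ((w - z) / (1 - conj w * z)) + (conj (-(w * a) + w ^ 2 * c + w * d) * (-(w * a) + w ^ 2 * c + w * d) + conj d * a)))) * D1)
            = ((w - ((((conj a * d + conj c * c) * ((w - z) / (1 - conj w * z)) - (conj a * (-(w * a) + w ^ 2 * c + w * d) + conj c * a))) / ((-conj (-(w * a) + w ^ 2 * c + w * d) * d - conj d * c) * ((w - z) / (1 - conj w * z)) + (conj (-(w * a) + w ^ 2 * c + w * d) * (-(w * a) + w ^ 2 * c + w * d) + conj d * a)))) * ((1 - w * conj w) * D1)) by ring,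
          show (1 - w * conj w) * ((1 - conj w * ((((conj a * d + conj c * c) * ((w - z) / (1 - conj w * z)) - (conj a * (-(w * a) + w ^ 2 * c + w * d) + conj c * a))) / ((-conj (-(w * a) + w ^ 2 * c + w * d) * d - conj d * c) * ((w - z) / (1 - conj w * z)) + (conj (-(w * a) + w ^ 2 * c + w * d) * (-(w * a) + w ^ 2 * c + w * d) + conj d * a)))) * D1)
            = ((1 - conj w * ((((conj a * d + conj c * c) * ((w - z) / (1 - conj w * z)) - (conj a * (-(w * a) + w ^ 2 * c + w * d) + conj c * a))) / ((-conj (-(w * a) + w ^ 2 * c + w * d) * d - conj d * c) * ((w - z) / (1 - conj w * z)) + (conj (-(w * a) + w ^ 2 * c + w * d) * (-(w * a) + w ^ 2 * c + w * d) + conj d * a)))) * ((1 - w * conj w) * D1)) by ring,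
          mul_div_mul_right _ _ (mul_ne_zero hx1 hD1ne)]
      rw [hvalue]
      exact (tau_lt w ((((conj a * d + conj c * c) * ((w - z) / (1 - conj w * z)) - (conj a * (-(w * a) + w ^ 2 * c + w * d) + conj c * a))) / ((-conj (-(w * a) + w ^ 2 * c + w * d) * d - conj d * c) * ((w - z) / (1 - conj w * z)) + (conj (-(w * a) + w ^ 2 * c + w * d) * (-(w * a) + w ^ 2 * c + w * d) + conj d * a))) hw hu).2
    subst hc
    have hprodid : (a + w * conj w * d) * (w * conj w * a + d)
        = (1 + w * conj w) ^ 2 * (a * d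
          - (-(w * a) + w ^ 2 * (conj w * (a - d) / (1 + w * conj w)) + w * d)
            * (conj w * (a - d) / (1 + w * conj w))) := by
      field_simp
      ring
    have h5 : (a + w * conj w * d) * (w * conj w * a + d) ≠ 0 := by
      rw [hprodid]
      exact mul_ne_zero (pow_ne_zero 2 h1px) hdet
    obtain ⟨hA2, hD2⟩ := mul_ne_zero_iff.mp h5
    have hD2a : a * w * conj w + d ≠ 0 := by convert hD2 using 1; ring
    have hD2b : d + w * conj w * a ≠ 0 := by convert hD2 using 1; ring
    obtain ⟨α, m, hαm, hm0, ha2, hd2⟩ : ∃ α m : ℂ, α ≠ 0 ∧ m ≠ 0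
        ∧ a = (α - w * conj w) * m ∧ d = (1 - α * (w * conj w)) * m := by
      refine ⟨(a + w * conj w * d) / (w * conj w * a + d),
        (w * conj w * a + d) / ((1 - w * conj w) * (1 + w * conj w)),
        div_ne_zero hA2 hD2, div_ne_zero hD2 (mul_ne_zero hx1 h1px), ?_, ?_⟩
      · field_simp
        ring
      · field_simp
        ring
    subst ha2 hd2
    have hαabs : 0 < ‖α‖ := norm_pos_iff.mpr hαm
    -- the conjugated map is y ↦ α y
    have hV : ∀ y : ℂ, ‖y‖ < 1 →
        (w - (((α - w * conj w) * m * ((w - y) / (1 - conj w * y)) + (-(w * ((α - w * conj w) * m)) + w ^ 2 * (conj w * (((α - w * conj w) * m) - ((1 - α * (w * conj w)) * m)) / (1 + w * conj w)) + w * ((1 - α * (w * conj w)) * m))) / ((conj w * (((α - w * conj w) * m) - ((1 - α * (w * conj w)) * m)) / (1 + w * conj w)) * ((w - y) / (1 - conj w * y)) + ((1 - α * (w * conj w)) * m)))) / (1 - conj w * (((α - w * conj w) * m * ((w - y) / (1 - conj w * y)) + (-(w * ((α - w * conj w) * m)) + w ^ 2 * (conj w * (((α - w * conj w) * m) - ((1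 - α * (w * conj w)) * m)) / (1 + w * conj w)) + w * ((1 - α * (w * conj w)) * m))) / ((conj w * (((α - w * conj w) * m) - ((1 - α * (w * conj w)) * m)) / (1 + w * conj w)) * ((w - y) / (1 - conj w * y)) + ((1 - α * (w * conj w)) * m)))) = α * y := by
      intro y hy
      obtain ⟨hyd, hyt⟩ := tau_lt w y hw hy
      obtain ⟨hQ, hφy⟩ := hself ((w - y) / (1 - conj w * y)) hyt
      have hod : 1 - conj w * (((α - w * conj w) * m * ((w - y) / (1 - conj w * y)) + (-(w * ((α - w * conj w) * m)) + w ^ 2 * (conj w * (((α - w * conj w) * m) - ((1 - α * (w * conj w)) * m)) / (1 + w * conj w)) + w * ((1 - α * (w * conj w)) * m))) / ((conj w * (((α - w * conj w) * m) - ((1 - α * (w * conj w)) * m)) / (1 + w * conj w)) * ((w - y) / (1 - conj w * y)) + ((1 - α * (w * conj w)) * m))) ≠ 0 := one_sub_ne (conj w) _ hcw hφy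
      set p : ℂ := ((α - w * conj w) * m * ((w - y) / (1 - conj w * y)) + (-(w * ((α - w * conj w) * m)) + w ^ 2 * (conj w * (((α - w * conj w) * m) - ((1 - α * (w * conj w)) * m)) / (1 + w * conj w)) + w * ((1 - α * (w * conj w)) * m))) with hpdef
      set q : ℂ := ((conj w * (((α - w * conj w) * m) - ((1 - α * (w * conj w)) * m)) / (1 + w * conj w)) * ((w - y) / (1 - conj w * y)) + ((1 - α * (w * conj w)) * m)) with hqdef
      have hkey : w * q - p = α * y * (q - conj w * p) := by
        rw [hpdef, hqdef]
        field_simp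
        ring
      have hY : q - conj w * p ≠ 0 := by
        intro h0
        apply hod
        have h1 : conj w * (p / q) = (conj w * p) / q := (mul_div_assoc _ _ _).symm
        have h2 : conj w * p = q := by linear_combination -h0
        rw [h1, h2, div_self hQ, sub_self]
      have e1 : w - p / q = (w * q - p) / q := by
        field_simp
      have e2 : 1 - conj w * (p / q) = (q - conj w * p) / q := by
        field_simp
      rw [e1, e2, div_div_div_cancel_right₀ hQ, div_eq_iff hY]
      exact hkey
    -- |α| ≤ 1
    have hαle : ‖α‖ ≤ 1 := by
      by_contra hgt
      push_neg at hgt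
      set y : ℂ := (((‖α‖)⁻¹ : ℝ) : ℂ) with hydef
      have hy : ‖y‖ < 1 := by
        rw [hydef, Complex.norm_real, Real.norm_eq_abs, abs_of_pos (by positivity)]
        rw [inv_lt_one_iff₀]
        right; exact hgt
      have h6 := (tau_lt w (((α - w * conj w) * m * ((w - y) / (1 - conj w * y)) + (-(w * ((α - w * conj w) * m)) + w ^ 2 * (conj w * (((α - w * conj w) * m) - ((1 - α * (w * conj w)) * m)) / (1 + w * conj w)) + w * ((1 - α * (w * conj w)) * m))) / ((conj w * (((α - w * conj w) * m) - ((1 - α * (w * conj w)) * m)) / (1 + w * conj w)) * ((w - y) / (1 - conj w * y)) + ((1 - α * (w * conj w)) * m))) hw (hself ((w - y) / (1 - conj w * y)) (tau_lt w y hw hy).2).2).2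
      rw [hV y hy] at h6
      rw [norm_mul, hydef, Complex.norm_real, Real.norm_eq_abs, abs_of_pos (by positivity),
        mul_inv_cancel₀ (ne_of_gt hαabs)] at h6
      exact lt_irrefl 1 h6
    -- the functional equation
    have hφτ : ∀ z : ℂ, ‖z‖ < 1 →
        ((α - w * conj w) * m * z + (-(w * ((α - w * conj w) * m)) + w ^ 2 * (conj w * (((α - w * conj w) * m) - ((1 - α * (w * conj w)) * m)) / (1 + w * conj w)) + w * ((1 - α * (w * conj w)) * m))) / ((conj w * (((α - w * conj w) * m) - ((1 - α * (w * conj w)) * m)) / (1 + w * conj w)) * z + ((1 - α * (w * conj w)) * m)) =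
          (w - α * ((w - z) / (1 - conj w * z))) /
            (1 - conj w * (α * ((w - z) / (1 - conj w * z)))) := by
      intro z hz
      obtain ⟨hzd, hzt⟩ := tau_lt w z hw hz
      have h7 := hV ((w - z) / (1 - conj w * z)) hzt
      rw [tau_tau w z hw hz] at h7
      have hφz := (hself z hz).2
      have h8 := (tau_tau w (((α - w * conj w) * m * z + (-(w * ((α - w * conj w) * m)) + w ^ 2 * (conj w * (((α - w * conj w) * m) - ((1 - α * (w * conj w)) * m)) / (1 + w * conj w)) + w * ((1 - α * (w * conj w)) * m))) / ((conj w * (((α - w * conj w) * m) - ((1 - α * (w * conj w)) * m)) / (1 + w * conj w)) * z + ((1 - α * (w * conj w)) * m))) hw hφz).symm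
      rw [h7] at h8
      exact h8
    refine ⟨α, hαabs, lt_of_le_of_ne hαle ?_, hφτ⟩
    -- |α| ≠ 1
    intro hα1
    apply hnotauto
    ext u
    simp only [Set.mem_setOf_eq]
    constructor
    · rintro ⟨z, hz, rfl⟩
      exact (hself z hz).2
    · intro hu
      have hτu := (tau_lt w u hw hu).2
      have hcαu : ‖conj α * ((w - u) / (1 - conj w * u))‖ < 1 := by
        rw [norm_mul, Complex.norm_conj, hα1, one_mul]
        exact hτu
      have hz := (tau_lt w (conj α * ((w - u) / (1 - conj w * u))) hw hcαu).2
      refine ⟨((w - (conj α * ((w - u) / (1 - conj w * u)))) / (1 - conj w * (conj α * ((w - u) / (1 - conj w * u))))), hz, ?_⟩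
      rw [hφτ _ hz, tau_tau w (conj α * ((w - u) / (1 - conj w * u))) hw hcαu]
      have hαα : α * (conj α * ((w - u) / (1 - conj w * u))) = (w - u) / (1 - conj w * u) := by
        rw [← mul_assoc, Complex.mul_conj, Complex.normSq_eq_norm_sq, hα1]
        norm_num
      rw [hαα, tau_tau w u hw hu]
  · intro h
    obtain ⟨α, hα0, hα1, heq⟩ := h
    have hαne : α ≠ 0 := norm_pos_iff.mp hα0
    have hwx : ‖w * conj w‖ < 1 := by
      rw [norm_mul, Complex.norm_conj]
      nlinarith [norm_nonneg w]
    have hs : (1 : ℂ) - α * (w * conj w) ≠ 0 := one_sub_ne α (w * conj w) hα1 hwx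
    have hx1 : (1 : ℂ) - w * conj w ≠ 0 := by
      have := one_sub_ne w (conj w) hw (by rwa [Complex.norm_conj])
      simpa [mul_comm] using this
    -- cross-multiplied relation at any point of the disk
    have hq : ∀ z : ℂ, ‖z‖ < 1 →
        (a * z + b) * ((conj w * (α - 1)) * z + (1 - α * (w * conj w)))
        = ((α - w * conj w) * z + w * (1 - α)) * (c * z + d) := by
      intro z hz
      obtain ⟨hτd, hτz⟩ := tau_lt w z hw hz
      obtain ⟨hcd, -⟩ := hself z hz
      have hαt : ‖α * ((w - z) / (1 - conj w * z))‖ < 1 := by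
        rw [norm_mul]
        nlinarith [norm_nonneg α, norm_nonneg ((w - z) / (1 - conj w * z))]
      have houter : 1 - conj w * (α * ((w - z) / (1 - conj w * z))) ≠ 0 :=
        one_sub_ne (conj w) _ (by rwa [Complex.norm_conj]) hαt
      have h1 := heq z hz
      rw [div_eq_div_iff hcd houter] at h1
      have hτd' : 1 - z * conj w ≠ 0 := by rwa [mul_comm]
      field_simp [hτd] at h1
      linear_combination h1
    have q0 := hq 0 (by simp)
    have q1 := hq (1/2) (by rw [norm_div, norm_one]; norm_num [Complex.norm_two])
    have q2 := hq (-(1/2)) (by rw [norm_neg, norm_div, norm_one]; norm_num [Complex.norm_two])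
    have hE0 : b * (1 - α * (w * conj w)) - w * (1 - α) * d = 0 := by linear_combination q0
    have hE1 : a * (1 - α * (w * conj w)) + b * (conj w * (α - 1))
        - (α - w * conj w) * d - w * (1 - α) * c = 0 := by linear_combination q1 - q2
    have hE2 : a * (conj w * (α - 1)) - (α - w * conj w) * c = 0 := by
      linear_combination 2 * q1 + 2 * q2 - 4 * q0
    -- solve for a, b, c in terms of d
    have hfac : α * (1 - w * conj w) ^ 2 ≠ 0 :=
      mul_ne_zero hαne (pow_ne_zero 2 hx1)
    have hTa : a = (α - w * conj w) * d / (1 - α * (w * conj w)) := by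
      rw [eq_div_iff hs]
      have h0 : α * (1 - w * conj w) ^ 2 * (a * (1 - α * (w * conj w)) - (α - w * conj w) * d) = 0 := by
        linear_combination ((α - w * conj w) * (1 - α * (w * conj w))) * hE1
          - ((α - w * conj w) * (conj w * (α - 1))) * hE0
          - (w * (1 - α) * (1 - α * (w * conj w))) * hE2
      have := mul_eq_zero.mp h0
      rcases this with h | h
      · exact absurd h hfac
      · linear_combination h
    have hTc : c = conj w * (α - 1) * d / (1 - α * (w * conj w)) := by
      rw [eq_div_iff hs]
      have h0 : α * (1 - w * conj w) ^ 2 * (c * (1 - α * (w * conj w)) - conj w * (α - 1) * d) = 0 := by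
        linear_combination (conj w * (α - 1) * (1 - α * (w * conj w))) * hE1
          - (conj w ^ 2 * (α - 1) ^ 2) * hE0
          - ((1 - α * (w * conj w)) ^ 2) * hE2
      rcases mul_eq_zero.mp h0 with h | h
      · exact absurd h hfac
      · linear_combination h
    have hTb : b = w * (1 - α) * d / (1 - α * (w * conj w)) := by
      rw [eq_div_iff hs]
      linear_combination hE0
    have hcs : (1 : ℂ) - conj α * (conj w * w) ≠ 0 := by
      intro h
      apply hs
      have := congrArg conj h
      simpa [mul_comm] using this
    obtain ⟨l, ha, hb, hc, hd⟩ : ∃ l : ℂ, a = (α - w * conj w) * l ∧ b = w * (1 - α) * l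
        ∧ c = conj w * (α - 1) * l ∧ d = (1 - α * (w * conj w)) * l := by
      refine ⟨d / (1 - α * (w * conj w)), ?_, ?_, ?_, ?_⟩
      · rw [hTa]; ring
      · rw [hTb]; ring
      · rw [hTc]; ring
      · have hs' : (1 : ℂ) - α * w * conj w ≠ 0 := by convert hs using 1; ring
        field_simp
    subst ha hb hc hd
    have hl : l ≠ 0 := by
      intro h
      apply hdet
      rw [h]
      ring
    have hcl : conj l ≠ 0 := by
      intro h
      apply hl
      have := congrArg conj h
      simpa using this
    intro z hz
    obtain ⟨hτd, hτz⟩ := tau_lt w z hw hz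
    have hv : ‖(conj α / α) * ((w - z) / (1 - conj w * z))‖ < 1 := by
      rw [norm_mul, norm_div, Complex.norm_conj, div_self (ne_of_gt hα0), one_mul]
      exact hτz
    obtain ⟨hvd, hτv⟩ := tau_lt w ((conj α / α) * ((w - z) / (1 - conj w * z))) hw hv
    set v : ℂ := (conj α / α) * ((w - z) / (1 - conj w * z)) with hvdef
    -- polynomial identities for numerator and denominator
    have hDeneq : (-conj (w * (1 - α) * l) * ((1 - α * (w * conj w)) * l)
          - conj ((1 - α * (w * conj w)) * l) * (conj w * (α - 1) * l)) * z
        + (conj (w * (1 - α) * l) * (w * (1 - α) * l)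
          + conj ((1 - α * (w * conj w)) * l) * ((α - w * conj w) * l))
        = conj l * l * (1 - w * conj w) *
          ((α - conj α * (w * conj w)) - conj w * (α - conj α) * z) := by
      simp only [map_mul, map_sub, map_add, map_one, Complex.conj_conj]
      ring
    have hNumeq : (conj ((α - w * conj w) * l) * ((1 - α * (w * conj w)) * l)
          + conj (conj w * (α - 1) * l) * (conj w * (α - 1) * l)) * z
        - (conj ((α - w * conj w) * l) * (w * (1 - α) * l)
          + conj (conj w * (α - 1) * l) * ((α - w * conj w) * l))
        = conj l * l * (1 - w * conj w) *
          ((conj α - α * (w * conj w)) * z + w * (α - conj α)) := by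
      simp only [map_mul, map_sub, map_add, map_one, Complex.conj_conj]
      ring
    have hbrak : (α - conj α * (w * conj w)) - conj w * (α - conj α) * z
        = α * ((1 - conj w * z) * (1 - conj w * v)) := by
      rw [hvdef]
      field_simp
      ring
    have hnum2 : (conj α - α * (w * conj w)) * z + w * (α - conj α)
        = α * ((1 - conj w * z) * (w - v)) := by
      rw [hvdef]
      field_simp
      ring
    have hKne : conj l * l * (1 - w * conj w) * (α * ((1 - conj w * z) * (1 - conj w * v))) ≠ 0 :=
      mul_ne_zero (mul_ne_zero (mul_ne_zero hcl hl) hx1)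
        (mul_ne_zero hαne (mul_ne_zero hτd hvd))
    have hDen : (-conj (w * (1 - α) * l) * ((1 - α * (w * conj w)) * l)
          - conj ((1 - α * (w * conj w)) * l) * (conj w * (α - 1) * l)) * z
        + (conj (w * (1 - α) * l) * (w * (1 - α) * l)
          + conj ((1 - α * (w * conj w)) * l) * ((α - w * conj w) * l)) ≠ 0 := by
      rw [hDeneq, hbrak]
      exact hKne
    refine ⟨hDen, ?_⟩
    have hfrac : (conj ((α - w * conj w) * l) * ((1 - α * (w * conj w)) * l)
          + conj (conj w * (α - 1) * l) * (conj w * (α - 1) * l)) * z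
        - (conj ((α - w * conj w) * l) * (w * (1 - α) * l)
          + conj (conj w * (α - 1) * l) * ((α - w * conj w) * l))
        = ((w - v) / (1 - conj w * v)) * ((-conj (w * (1 - α) * l) * ((1 - α * (w * conj w)) * l)
          - conj ((1 - α * (w * conj w)) * l) * (conj w * (α - 1) * l)) * z
        + (conj (w * (1 - α) * l) * (w * (1 - α) * l)
          + conj ((1 - α * (w * conj w)) * l) * ((α - w * conj w) * l))) := by
      rw [hDeneq, hNumeq, hbrak, hnum2]
      rw [div_mul_eq_mul_div, eq_div_iff hvd]
      ring
    rw [(div_eq_iff hDen).mpr hfrac]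
    exact hτv
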